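/- If F is subexponential, then for every fixed r > 0, J(x,r) = ∫_r^{x-r} F̄(x-y)/F̄(x) dF(y) converges to F̄(r) as x → ∞. -/

import Mathlib

open Filter MeasureTheory Set

noncomputable def tail (μ : Measure ℝ) (x : ℝ) : ℝ := (μ (Set.Ioi x)).toReal

noncomputable def convn (μ : Measure ℝ) : ℕ → Measure ℝ
  | 0 => Measure.dirac 0
  | n + 1 => ((convn μ n).prod μ).map (fun p : ℝ × ℝ => p.1 + p.2)

open scoped ENNReal Topology

noncomputable def Lfun (μ : Measure ℝ) (x : ℝ) (s : Set ℝ) : ℝ≥0∞ :=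
  ∫⁻ y in s, μ (Set.Ioi (x - y)) ∂μ

section aux
variable (μ : Measure ℝ) [IsProbabilityMeasure μ]

omit [IsProbabilityMeasure μ] in
lemma mono_tailfun (x : ℝ) : Monotone (fun y : ℝ => μ (Set.Ioi (x - y))) := by
  intro a b hab
  exact measure_mono (Ioi_subset_Ioi (by linarith))

lemma conv1_eq : convn μ 1 = μ := by
  show ((Measure.dirac 0).prod μ).map (fun p : ℝ × ℝ => p.1 + p.2) = μ
  rw [Measure.dirac_prod, Measure.map_map (by fun_prop) (by fun_prop)]
  simp [Function.comp_def]

lemma conv2_apply (x : ℝ) :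
    convn μ 2 (Set.Ioi x) = ∫⁻ a, μ (Set.Ioi (x - a)) ∂μ := by
  show (((convn μ 1).prod μ).map (fun p : ℝ × ℝ => p.1 + p.2)) (Set.Ioi x) = _
  rw [conv1_eq, Measure.map_apply (by fun_prop) measurableSet_Ioi,
    Measure.prod_apply ((by fun_prop : Measurable fun p : ℝ × ℝ => p.1 + p.2) measurableSet_Ioi)]
  refine lintegral_congr fun a => ?_
  congr 1
  ext b
  simp [sub_lt_iff_lt_add']

lemma conv2_split (hsupp : μ (Set.Iio 0) = 0) (x : ℝ) :
    convn μ 2 (Set.Ioi x) = μ (Set.Ioi x) + Lfun μ x (Set.Iic x) := by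
  rw [conv2_apply, ← lintegral_add_compl (fun a => μ (Set.Ioi (x - a))) measurableSet_Iic,
    compl_Iic]
  have h1 : ∫⁻ a in Set.Ioi x, μ (Set.Ioi (x - a)) ∂μ = μ (Set.Ioi x) := by
    have : ∀ a ∈ Set.Ioi x, μ (Set.Ioi (x - a)) = 1 := by
      intro a ha
      refine le_antisymm prob_le_one ?_
      have hsub' : Set.Ici (0:ℝ) ⊆ Set.Ioi (x - a) := fun z hz => by
        simp only [mem_Ioi]; simp only [mem_Ici] at hz
        simp only [mem_Ioi] at ha; linarith
      calc (1:ℝ≥0∞) = μ (Set.Ici 0) := by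
            rw [← compl_Iio, measure_compl measurableSet_Iio (measure_ne_top μ _), hsupp]
            simp
        _ ≤ μ (Set.Ioi (x - a)) := measure_mono hsub'
    rw [setLIntegral_congr_fun measurableSet_Ioi this]
    simp [setLIntegral_const]
  rw [h1, add_comm]; rfl

lemma tail_conv2 (hsupp : μ (Set.Iio 0) = 0) (x : ℝ) :
    tail (convn μ 2) x = tail μ x + (Lfun μ x (Set.Iic x)).toReal := by
  have hle : Lfun μ x (Set.Iic x) ≤ μ (Set.Iic x) := by
    calc Lfun μ x (Set.Iic x) ≤ ∫⁻ _ in Set.Iic x, 1 ∂μ := lintegral_mono fun y => prob_le_one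
      _ = μ (Set.Iic x) := setLIntegral_one _
  rw [tail, conv2_split μ hsupp,
    ENNReal.toReal_add (measure_ne_top μ _) ((hle.trans_lt (measure_lt_top μ _)).ne)]
  rfl

end aux

section aux2
variable (μ : Measure ℝ) [IsProbabilityMeasure μ]

lemma Lfun_le (x : ℝ) (s : Set ℝ) : Lfun μ x s ≤ μ s := by
  calc Lfun μ x s ≤ ∫⁻ _ in s, 1 ∂μ := lintegral_mono fun y => prob_le_one
    _ = μ s := setLIntegral_one s

lemma Lfun_ne_top (x : ℝ) (s : Set ℝ) : Lfun μ x s ≠ ⊤ :=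
  ((Lfun_le μ x s).trans_lt (measure_lt_top μ s)).ne

lemma integral_tail_eq (x : ℝ) (s : Set ℝ) :
    ∫ y in s, tail μ (x - y) ∂μ = (Lfun μ x s).toReal := by
  rw [Lfun, ← integral_toReal ((mono_tailfun μ x).measurable).aemeasurable
    (ae_of_all _ fun y => measure_lt_top μ _)]
  rfl

omit [IsProbabilityMeasure μ] in
lemma Lfun_union (x : ℝ) {s t : Set ℝ} (hd : Disjoint s t) (ht : MeasurableSet t) :
    Lfun μ x (s ∪ t) = Lfun μ x s + Lfun μ x t :=
  lintegral_union ht hd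

omit [IsProbabilityMeasure μ] in
lemma Lfun_decomp (x r : ℝ) (hr : 0 < r) (hx : 2 * r ≤ x) :
    Lfun μ x (Set.Iic x)
      = Lfun μ x (Set.Iic r) + Lfun μ x (Set.Ioc r (x - r)) + Lfun μ x (Set.Ioc (x - r) x) := by
  have h1 : Set.Iic r ∪ Set.Ioc r (x - r) = Set.Iic (x - r) := Iic_union_Ioc_eq_Iic (by linarith)
  have h2 : Set.Iic (x - r) ∪ Set.Ioc (x - r) x = Set.Iic x := Iic_union_Ioc_eq_Iic (by linarith)
  rw [← h2, Lfun_union μ x (by simp [Set.disjoint_left]; intro a ha hb; linarith) measurableSet_Ioc,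
    ← h1, Lfun_union μ x (by simp [Set.disjoint_left]; intro a ha hb; linarith) measurableSet_Ioc]

omit [IsProbabilityMeasure μ] in
lemma B1 (x r : ℝ) : Lfun μ x (Set.Iic r) ≤ μ (Set.Ioi (x - r)) * μ (Set.Iic r) := by
  calc Lfun μ x (Set.Iic r) ≤ ∫⁻ _ in Set.Iic r, μ (Set.Ioi (x - r)) ∂μ :=
        setLIntegral_mono measurable_const fun y hy =>
          measure_mono (Ioi_subset_Ioi (by simp only [mem_Iic] at hy; linarith))
    _ = μ (Set.Ioi (x - r)) * μ (Set.Iic r) := setLIntegral_const _ _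

omit [IsProbabilityMeasure μ] in
lemma B2 (hsupp : μ (Set.Iio 0) = 0) (x r : ℝ) :
    μ (Set.Ioi x) * μ (Set.Iic r) ≤ Lfun μ x (Set.Iic r) := by
  have hae : ∀ᵐ y ∂μ, 0 ≤ y := by
    rw [ae_iff]
    simp only [not_le]; exact hsupp
  calc μ (Set.Ioi x) * μ (Set.Iic r) = ∫⁻ _ in Set.Iic r, μ (Set.Ioi x) ∂μ :=
        (setLIntegral_const _ _).symm
    _ ≤ Lfun μ x (Set.Iic r) := by
        refine setLIntegral_mono_ae ((mono_tailfun μ x).measurable).aemeasurable ?_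
        filter_upwards [hae] with y hy _
        exact measure_mono (Ioi_subset_Ioi (by linarith))

omit [IsProbabilityMeasure μ] in
lemma B3 (x r : ℝ) :
    μ (Set.Ioi (x - r)) * μ (Set.Ioc r x) ≤ Lfun μ x (Set.Ioc r x) := by
  calc μ (Set.Ioi (x - r)) * μ (Set.Ioc r x) = ∫⁻ _ in Set.Ioc r x, μ (Set.Ioi (x - r)) ∂μ :=
        (setLIntegral_const _ _).symm
    _ ≤ Lfun μ x (Set.Ioc r x) :=
        setLIntegral_mono ((mono_tailfun μ x).measurable) fun y hy =>
          measure_mono (Ioi_subset_Ioi (by simp only [mem_Ioc] at hy; linarith))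

lemma meas_Iic (r : ℝ) : (μ (Set.Iic r)).toReal = 1 - tail μ r := by
  rw [← compl_Ioi, measure_compl measurableSet_Ioi (measure_ne_top μ _), measure_univ,
    ENNReal.toReal_sub_of_le prob_le_one ENNReal.one_ne_top]
  simp [tail]

lemma meas_Ioc {a b : ℝ} (hab : a ≤ b) : (μ (Set.Ioc a b)).toReal = tail μ a - tail μ b := by
  rw [← Ioi_diff_Ioi, measure_diff (Ioi_subset_Ioi hab) measurableSet_Ioi.nullMeasurableSet
    (measure_ne_top μ _),
    ENNReal.toReal_sub_of_le (measure_mono (Ioi_subset_Ioi hab)) (measure_ne_top μ _)]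
  rfl

lemma tail_anti : Antitone (tail μ) := fun a b hab =>
  ENNReal.toReal_le_toReal (measure_ne_top μ _) (measure_ne_top μ _) |>.mpr
    (measure_mono (Ioi_subset_Ioi hab))

lemma tail_tendsto_zero : Tendsto (tail μ) atTop (𝓝 0) := by
  have h := tendsto_measure_Iic_atTop μ
  rw [measure_univ] at h
  have h2 : Tendsto (fun x => (μ (Set.Iic x)).toReal) atTop (𝓝 1) := by
    have := (ENNReal.tendsto_toReal ENNReal.one_ne_top).comp h
    simpa [Function.comp_def] using this
  have heq : ∀ x, tail μ x = 1 - (μ (Set.Iic x)).toReal := by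
    intro x
    have := meas_Iic μ x
    linarith
  rw [funext heq]
  have := (tendsto_const_nhds (x := (1:ℝ)) (f := atTop)).sub h2
  simpa using this

end aux2

/-- If F is subexponential, then for fixed r > 0,
J(x,r) = ∫_r^{x-r} F̄(x-y)/F̄(x) dF(y) → F̄(r) as x → ∞. -/
theorem J_tendsto_tail (μ : Measure ℝ) [IsProbabilityMeasure μ]
    (hsupp : μ (Set.Iio 0) = 0) (hunb : ∀ x, 0 < μ (Set.Ioi x))
    (hsub : Tendsto (fun x => tail (convn μ 2) x / tail μ x) atTop (nhds 2))
    (r : ℝ) (hr : 0 < r) :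
    Tendsto (fun x => ∫ y in Set.Ioc r (x - r), tail μ (x - y) / tail μ x ∂μ)
      atTop (nhds (tail μ r)) := by
  have Tpos : ∀ x, 0 < tail μ x := fun x => ENNReal.toReal_pos (hunb x).ne' (measure_ne_top μ _)
  have hT0 := tail_tendsto_zero μ
  have Tanti := tail_anti μ
  set T : ℝ → ℝ := tail μ with hT
  set G : ℝ → ℝ := fun x => (Lfun μ x (Set.Iic x)).toReal with hG
  -- limit of G x / T x
  have hGlim : Tendsto (fun x => G x / T x) atTop (𝓝 1) := by
    have heq : (fun x => G x / T x) = fun x => tail (convn μ 2) x / T x - 1 := by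
      funext x
      rw [tail_conv2 μ hsupp x, add_div, div_self (Tpos x).ne']
      ring
    rw [heq]
    have := hsub.sub_const 1
    norm_num at this
    exact this
  -- ratio limit (long-tailedness)
  have hrat : Tendsto (fun x => T (x - r) / T x) atTop (𝓝 1) := by
    have hlow : ∀ x, 1 ≤ T (x - r) / T x := fun x =>
      (one_le_div (Tpos x)).mpr (Tanti (by linarith))
    have hU : Tendsto (fun x => (G x / T x - (1 - T r)) / (T r - T x)) atTop (𝓝 1) := by
      have h1 : Tendsto (fun x => G x / T x - (1 - T r)) atTop (𝓝 (T r)) := by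
        have := hGlim.sub_const (1 - T r)
        have hv : 1 - (1 - T r) = T r := by ring
        rwa [hv] at this
      have h2 : Tendsto (fun x => T r - T x) atTop (𝓝 (T r)) := by
        have := (tendsto_const_nhds (x := T r) (f := atTop)).sub hT0
        simpa using this
      have := h1.div h2 (Tpos r).ne'
      rwa [div_self (Tpos r).ne'] at this
    refine tendsto_of_tendsto_of_tendsto_of_le_of_le' tendsto_const_nhds hU
      (Eventually.of_forall hlow) ?_
    filter_upwards [eventually_ge_atTop r, hT0.eventually_lt_const (Tpos r)] with x hx1 hx2
    have key : T x * (1 - T r) + T (x - r) * (T r - T x) ≤ G x := by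
      have hEN : μ (Set.Ioi x) * μ (Set.Iic r) + μ (Set.Ioi (x - r)) * μ (Set.Ioc r x)
          ≤ Lfun μ x (Set.Iic x) := by
        have hu : Set.Iic r ∪ Set.Ioc r x = Set.Iic x := Iic_union_Ioc_eq_Iic hx1
        rw [← hu, Lfun_union μ x (by simp [Set.disjoint_left]; intro a ha hb; linarith)
          measurableSet_Ioc]
        exact add_le_add (B2 μ hsupp x r) (B3 μ x r)
      have h2 := (ENNReal.toReal_le_toReal
        (by finiteness) (Lfun_ne_top μ x _)).mpr hEN
      rw [ENNReal.toReal_add (by finiteness) (by finiteness), ENNReal.toReal_mul,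
        ENNReal.toReal_mul, meas_Iic, meas_Ioc μ hx1] at h2
      exact h2
    have hm2 : 0 < T r - T x := by linarith
    rw [div_le_div_iff₀ (Tpos x) hm2]
    have hc : G x / T x * T x = G x := div_mul_cancel₀ _ (Tpos x).ne'
    nlinarith [key, hc]
  -- limits of side pieces
  have hI1 : Tendsto (fun x => (Lfun μ x (Set.Iic r)).toReal / T x) atTop (𝓝 (1 - T r)) := by
    have hub : Tendsto (fun x => T (x - r) / T x * (1 - T r)) atTop (𝓝 (1 - T r)) := by
      have := hrat.mul_const (1 - T r)
      simpa using this
    refine tendsto_of_tendsto_of_tendsto_of_le_of_le' tendsto_const_nhds hub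
      (Eventually.of_forall fun x => ?_) (Eventually.of_forall fun x => ?_)
    · rw [le_div_iff₀ (Tpos x)]
      have := (ENNReal.toReal_le_toReal (by finiteness) (Lfun_ne_top μ x _)).mpr (B2 μ hsupp x r)
      rw [ENNReal.toReal_mul, meas_Iic] at this
      have e1 : (μ (Set.Ioi x)).toReal = T x := rfl
      have e3 : tail μ r = T r := rfl
      rw [e1, e3] at this
      linarith
    · rw [div_le_iff₀ (Tpos x)]
      have := (ENNReal.toReal_le_toReal (Lfun_ne_top μ x _) (by finiteness)).mpr (B1 μ x r)
      rw [ENNReal.toReal_mul, meas_Iic] at this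
      have e2 : (μ (Set.Ioi (x - r))).toReal = T (x - r) := rfl
      have e3 : tail μ r = T r := rfl
      have hc : T (x - r) / T x * (1 - T r) * T x = T (x - r) * (1 - T r) := by
        rw [div_mul_eq_mul_div, div_mul_eq_mul_div, div_eq_iff (Tpos x).ne']
      rw [e2, e3] at this
      linarith
  have hI3 : Tendsto (fun x => (Lfun μ x (Set.Ioc (x - r) x)).toReal / T x) atTop (𝓝 0) := by
    have hub : Tendsto (fun x => T (x - r) / T x - 1) atTop (𝓝 0) := by
      have := hrat.sub_const 1
      rwa [sub_self] at this
    refine tendsto_of_tendsto_of_tendsto_of_le_of_le' tendsto_const_nhds hub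
      (Eventually.of_forall fun x => div_nonneg ENNReal.toReal_nonneg (Tpos x).le)
      (Eventually.of_forall fun x => ?_)
    have h1 := (ENNReal.toReal_le_toReal (Lfun_ne_top μ x _) (by finiteness)).mpr
      (Lfun_le μ x (Set.Ioc (x - r) x))
    rw [meas_Ioc μ (by linarith : x - r ≤ x)] at h1
    rw [div_le_iff₀ (Tpos x)]
    have hc : (T (x - r) / T x - 1) * T x = T (x - r) - T x := by
      rw [sub_mul, one_mul, div_mul_cancel₀ _ (Tpos x).ne']
    rw [hc]
    exact h1
  -- identify J with the combination
  have hfin : (fun x => G x / T x - (Lfun μ x (Set.Iic r)).toReal / T x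
        - (Lfun μ x (Set.Ioc (x - r) x)).toReal / T x)
      =ᶠ[atTop] fun x => ∫ y in Set.Ioc r (x - r), tail μ (x - y) / tail μ x ∂μ := by
    filter_upwards [eventually_ge_atTop (2 * r)] with x hx
    have hdec := Lfun_decomp μ x r hr hx
    have hGx : G x = (Lfun μ x (Set.Iic r)).toReal + (Lfun μ x (Set.Ioc r (x - r))).toReal
        + (Lfun μ x (Set.Ioc (x - r) x)).toReal := by
      rw [hG]
      simp only [hdec]
      rw [ENNReal.toReal_add
        (ENNReal.add_ne_top.mpr ⟨Lfun_ne_top μ x _, Lfun_ne_top μ x _⟩) (Lfun_ne_top μ x _),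
        ENNReal.toReal_add (Lfun_ne_top μ x _) (Lfun_ne_top μ x _)]
    have hint : ∫ y in Set.Ioc r (x - r), tail μ (x - y) / tail μ x ∂μ
        = (Lfun μ x (Set.Ioc r (x - r))).toReal / T x := by
      rw [integral_div, integral_tail_eq μ x]
    rw [hint, hGx, add_div, add_div]
    ring
  have hlim := (hGlim.sub hI1).sub hI3
  have hval : 1 - (1 - T r) - 0 = T r := by ring
  rw [hval] at hlim
  exact hlim.congr' hfin
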